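/- arXiv:2003.01566 — 8 statements merged into one kernel-verified Lean document; each statement's English description precedes it below -/
import Mathlib

section
/- Let $E$ be a normed space and $e \in S(E)$ a unit vector. If $\mathrm{St}(e) = \{e\}$, then $e$ is an extreme point of the closed unit ball $E_1$. -/
/-- The star-like set of a unit vector `e`. -/
def St {E : Type*} [NormedAddCommGroup E] (e : E) : Set E :=
  {e' | ‖e'‖ = 1 ∧ ‖e + e'‖ = 2}

theorem extremePoint_of_st_singleton {E : Type*} [NormedAddCommGroup E] [NormedSpace ℝ E]
    (e : E) (he : ‖e‖ = 1) (h : St e = {e}) :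
    e ∈ Set.extremePoints ℝ (Metric.closedBall (0 : E) 1) := by
  rw [mem_extremePoints]
  refine ⟨by simp [he], ?_⟩
  intro x hx y hy hseg
  simp only [Metric.mem_closedBall, dist_zero_right] at hx hy
  obtain ⟨a, b, ha, hb, hab, hxy⟩ := hseg
  have hex : ‖e + x‖ ≤ 2 := by
    calc ‖e + x‖ ≤ ‖e‖ + ‖x‖ := norm_add_le _ _
      _ ≤ 2 := by rw [he]; linarith
  have hey : ‖e + y‖ ≤ 2 := by
    calc ‖e + y‖ ≤ ‖e‖ + ‖y‖ := norm_add_le _ _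
      _ ≤ 2 := by rw [he]; linarith
  have h2 : a • (e + x) + b • (e + y) = (2 : ℝ) • e := by
    have hee : a • e + b • e = e := by rw [← add_smul, hab, one_smul]
    calc a • (e + x) + b • (e + y)
        = (a • e + b • e) + (a • x + b • y) := by
          rw [smul_add, smul_add]; abel
      _ = e + e := by rw [hee, hxy]
      _ = (2 : ℝ) • e := (two_smul ℝ e).symm
  have hkey : 2 ≤ a * ‖e + x‖ + b * ‖e + y‖ := by
    calc (2 : ℝ) = ‖(2 : ℝ) • e‖ := by
          rw [norm_smul, he]; simp
      _ = ‖a • (e + x) + b • (e + y)‖ := by rw [h2]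
      _ ≤ ‖a • (e + x)‖ + ‖b • (e + y)‖ := norm_add_le _ _
      _ = a * ‖e + x‖ + b * ‖e + y‖ := by
          rw [norm_smul, norm_smul, Real.norm_of_nonneg ha.le, Real.norm_of_nonneg hb.le]
  have hx2 : ‖e + x‖ = 2 := by nlinarith
  have hy2 : ‖e + y‖ = 2 := by nlinarith
  have hxn : ‖x‖ = 1 := by
    have : 2 ≤ ‖e‖ + ‖x‖ := hx2 ▸ norm_add_le e x
    rw [he] at this; linarith
  have hyn : ‖y‖ = 1 := by
    have : 2 ≤ ‖e‖ + ‖y‖ := hy2 ▸ norm_add_le e y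
    rw [he] at this; linarith
  constructor
  · have : x ∈ St e := ⟨hxn, hx2⟩
    rwa [h, Set.mem_singleton_iff] at this
  · have : y ∈ St e := ⟨hyn, hy2⟩
    rwa [h, Set.mem_singleton_iff] at this
end

section
/- Let $R_1$ and $R_2$ be distinct T-sets in a normed space $E$ with $R_1 \cap R_2 \neq \{0\}$. Then for any $w_1^* \in \Gamma_{R_1}$ and $w_2^* \in \Gamma_{R_2}$, $\|w_1^* + w_2^*\| = 2$, i.e., $w_1^* \in \mathrm{St}(w_2^*)$. -/
def NormAdditive {E : Type*} [NormedAddCommGroup E] (S : Set E) : Prop :=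
  ∀ l : List E, (∀ e ∈ l, e ∈ S) → ‖l.sum‖ = (l.map fun e => ‖e‖).sum

def IsTSet {E : Type*} [NormedAddCommGroup E] (S : Set E) : Prop :=
  NormAdditive S ∧ ∀ R : Set E, NormAdditive R → S ⊆ R → R = S

/-- The set of norm-one functionals norming every element of `R`. -/
def Gamma {E : Type*} [NormedAddCommGroup E] [NormedSpace ℝ E] (R : Set E) :
    Set (E →L[ℝ] ℝ) := {w | ‖w‖ = 1 ∧ ∀ u ∈ R, w u = ‖u‖}

lemma zero_mem_of_tset {E : Type*} [NormedAddCommGroup E] {S : Set E}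
    (hS : IsTSet S) : (0 : E) ∈ S := by
  have key : NormAdditive (insert 0 S) := by
    intro l hl
    have H : ∀ l : List E, (∀ e ∈ l, e ∈ insert (0:E) S) →
        ∃ l' : List E, (∀ e ∈ l', e ∈ S) ∧ l'.sum = l.sum ∧
          (l'.map fun e => ‖e‖).sum = (l.map fun e => ‖e‖).sum := by
      intro l hl
      induction l with
      | nil => exact ⟨[], by simp, rfl, rfl⟩
      | cons a t ih =>
        obtain ⟨l', hmem, hsum, hnorm⟩ := ih fun e he => hl e (List.mem_cons_of_mem _ he)
        rcases hl a List.mem_cons_self with ha | ha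
        · exact ⟨l', hmem, by simp [ha, hsum], by simp [ha, hnorm]⟩
        · refine ⟨a :: l', ?_, by simp [hsum], by simp [hnorm]⟩
          intro e he
          rcases List.mem_cons.mp he with rfl | he
          · exact ha
          · exact hmem e he
    obtain ⟨l', hmem, hsum, hnorm⟩ := H l hl
    rw [← hsum, ← hnorm]
    exact hS.1 l' hmem
  have := hS.2 _ key (Set.subset_insert _ _)
  rw [← this]
  exact Set.mem_insert _ _

theorem gamma_st {E : Type*} [NormedAddCommGroup E] [NormedSpace ℝ E]
    (R₁ R₂ : Set E) (hR₁ : IsTSet R₁) (hR₂ : IsTSet R₂) (hne : R₁ ≠ R₂)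
    (hint : R₁ ∩ R₂ ≠ {0}) (w₁ w₂ : E →L[ℝ] ℝ)
    (hw₁ : w₁ ∈ Gamma R₁) (hw₂ : w₂ ∈ Gamma R₂) :
    ‖w₁ + w₂‖ = 2 := by
  obtain ⟨x, hx, hx0⟩ : ∃ x ∈ R₁ ∩ R₂, x ≠ 0 := by
    by_contra h
    push_neg at h
    apply hint
    ext y
    constructor
    · intro hy; exact h y hy
    · intro hy
      simp only [Set.mem_singleton_iff] at hy
      subst hy
      exact ⟨zero_mem_of_tset hR₁, zero_mem_of_tset hR₂⟩
  have h1 : w₁ x = ‖x‖ := hw₁.2 x hx.1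
  have h2 : w₂ x = ‖x‖ := hw₂.2 x hx.2
  have hxpos : (0:ℝ) < ‖x‖ := norm_pos_iff.mpr hx0
  have hle : ‖w₁ + w₂‖ ≤ 2 := by
    calc ‖w₁ + w₂‖ ≤ ‖w₁‖ + ‖w₂‖ := norm_add_le _ _
    _ = 2 := by rw [hw₁.1, hw₂.1]; norm_num
  have hge : 2 * ‖x‖ ≤ ‖w₁ + w₂‖ * ‖x‖ := by
    have := (w₁ + w₂).le_opNorm x
    rw [ContinuousLinearMap.add_apply, h1, h2] at this
    have habs : ‖w₁ x + w₂ x‖ = 2 * ‖x‖ := by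
      rw [h1, h2, Real.norm_eq_abs, abs_of_nonneg (by positivity)]; ring
    calc 2 * ‖x‖ = ‖w₁ x + w₂ x‖ := habs.symm
    _ ≤ ‖w₁ + w₂‖ * ‖x‖ := (w₁ + w₂).le_opNorm x
  have : 2 ≤ ‖w₁ + w₂‖ := le_of_mul_le_mul_right hge hxpos
  linarith
end

section
/- If $R_1$ and $R_2$ are distinct T-sets in a normed space $E$, then $\Gamma_{R_1} \cap \Gamma_{R_2} = \emptyset$. -/
lemma normAdditive_of_functional {E : Type*} [NormedAddCommGroup E] [NormedSpace ℝ E]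
    (w : E →L[ℝ] ℝ) (hw : ‖w‖ = 1) : NormAdditive {u : E | w u = ‖u‖} := by
  have key : ∀ l : List E, ‖l.sum‖ ≤ (l.map fun e => ‖e‖).sum := by
    intro l
    induction l with
    | nil => simp
    | cons a t ih =>
      simp only [List.sum_cons, List.map_cons]
      exact (norm_add_le _ _).trans (by linarith)
  intro l hl
  refine le_antisymm (key l) ?_
  have h1 : (l.map fun e => ‖e‖).sum = w l.sum := by
    rw [map_list_sum]
    congr 1
    refine List.map_congr_left fun e he => ?_
    exact (hl e he).symm
  calc (l.map fun e => ‖e‖).sum = w l.sum := h1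
    _ ≤ ‖w l.sum‖ := le_abs_self _
    _ ≤ ‖w‖ * ‖l.sum‖ := w.le_opNorm _
    _ = ‖l.sum‖ := by rw [hw, one_mul]

theorem gamma_disjoint {E : Type*} [NormedAddCommGroup E] [NormedSpace ℝ E]
    (R₁ R₂ : Set E) (hR₁ : IsTSet R₁) (hR₂ : IsTSet R₂) (hne : R₁ ≠ R₂) :
    Gamma R₁ ∩ Gamma R₂ = ∅ := by
  by_contra h
  obtain ⟨w, ⟨hw1, hwR₁⟩, ⟨_, hwR₂⟩⟩ := Set.nonempty_iff_ne_empty.2 h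
  have hS := normAdditive_of_functional w hw1
  have e1 := hR₁.2 _ hS fun u hu => hwR₁ u hu
  have e2 := hR₂.2 _ hS fun u hu => hwR₂ u hu
  exact hne (e1 ▸ e2)
end

section
/- If $E$ is a normed space whose dual $E^*$ is strictly convex, then for every T-set $R$ in $E$, the set $\Gamma_R$ contains at most one element (and since $\Gamma_R$ is nonempty for any T-set, it is a singleton). -/
theorem gamma_subsingleton_of_dual_strictConvex {E : Type*} [NormedAddCommGroup E]
    [NormedSpace ℝ E]
    (hsc : ∀ f g : E →L[ℝ] ℝ, ‖f‖ = 1 → ‖g‖ = 1 → f ≠ g → ‖f + g‖ < 2)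
    (R : Set E) (hR : IsTSet R) (hR0 : R ≠ {0})
    (w₁ w₂ : E →L[ℝ] ℝ) (hw₁ : w₁ ∈ Gamma R) (hw₂ : w₂ ∈ Gamma R) :
    w₁ = w₂ := by
  -- First find a nonzero element of R.
  have hzero : NormAdditive ({0} : Set E) := by
    intro l hl
    have h1 : l.sum = 0 := List.sum_eq_zero fun x hx => hl x hx
    have h2 : (l.map fun e => ‖e‖).sum = 0 := by
      apply List.sum_eq_zero
      intro x hx
      obtain ⟨e, he, rfl⟩ := List.mem_map.1 hx
      simpa using hl e he
    simp [h1, h2]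
  have hne : ∃ u ∈ R, u ≠ 0 := by
    by_contra h
    push_neg at h
    have hsub : R ⊆ ({0} : Set E) := fun x hx => h x hx
    have := hR.2 {0} hzero hsub
    exact hR0 this.symm
  obtain ⟨u, huR, hu0⟩ := hne
  by_contra hne
  have hlt := hsc w₁ w₂ hw₁.1 hw₂.1 hne
  have h1 : (w₁ + w₂) u = 2 * ‖u‖ := by
    simp [hw₁.2 u huR, hw₂.2 u huR]; ring
  have hub : (w₁ + w₂) u ≤ ‖w₁ + w₂‖ * ‖u‖ :=
    le_trans (le_abs_self _) ((w₁ + w₂).le_opNorm u)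
  have hupos : (0 : ℝ) < ‖u‖ := norm_pos_iff.2 hu0
  nlinarith [hub, h1, hlt, hupos]
end

section
/- For any T-set $R$ in a normed space $E$, the set $\Gamma_R$ is a convex subset of the unit sphere of $E^*$ which is norm additive. -/
lemma list_norm_sum_le {F : Type*} [SeminormedAddCommGroup F] (l : List F) :
    ‖l.sum‖ ≤ (l.map fun e => ‖e‖).sum := by
  induction l with
  | nil => simp
  | cons a l ih =>
    simp only [List.sum_cons, List.map_cons]
    exact (norm_add_le _ _).trans (by linarith)

theorem gamma_convex_normAdditive {E : Type*} [NormedAddCommGroup E] [NormedSpace ℝ E]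
    (R : Set E) (hR : IsTSet R) (hR0 : R ≠ {0}) :
    Convex ℝ (Gamma R) ∧ (∀ w ∈ Gamma R, ‖w‖ = 1) ∧ NormAdditive (Gamma R) := by
  obtain ⟨u, huR, hu0⟩ : ∃ u ∈ R, u ≠ 0 := by
    by_contra h
    push_neg at h
    have hsub : R ⊆ {0} := fun x hx => h x hx
    have h0 : NormAdditive ({0} : Set E) := by
      intro l hl
      have hs : l.sum = 0 := List.sum_eq_zero (fun x hx => hl x hx)
      have hm : (l.map fun e => ‖e‖).sum = 0 := by
        apply List.sum_eq_zero
        intro x hx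
        obtain ⟨e, he, rfl⟩ := List.mem_map.mp hx
        simp [Set.mem_singleton_iff.mp (hl e he)]
      simp [hs, hm]
    exact hR0 (hR.2 {0} h0 hsub).symm
  have hupos : (0:ℝ) < ‖u‖ := norm_pos_iff.mpr hu0
  have key : ∀ (w : E →L[ℝ] ℝ) (c : ℝ), w u = c * ‖u‖ → c ≤ ‖w‖ := by
    intro w c hw
    have h1 : c * ‖u‖ ≤ ‖w‖ * ‖u‖ := by
      calc c * ‖u‖ = w u := hw.symm
        _ ≤ |w u| := le_abs_self _
        _ ≤ ‖w‖ * ‖u‖ := w.le_opNorm u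
    exact le_of_mul_le_mul_right h1 hupos
  refine ⟨?_, fun w hw => hw.1, ?_⟩
  · intro w1 h1 w2 h2 a b ha hb hab
    have happ : ∀ v ∈ R, (a • w1 + b • w2) v = ‖v‖ := by
      intro v hv
      simp only [ContinuousLinearMap.add_apply, ContinuousLinearMap.coe_smul',
        Pi.smul_apply, smul_eq_mul]
      rw [h1.2 v hv, h2.2 v hv, ← add_mul, hab, one_mul]
    refine ⟨le_antisymm ?_ ?_, happ⟩
    · calc ‖a • w1 + b • w2‖ ≤ ‖a • w1‖ + ‖b • w2‖ := norm_add_le _ _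
        _ = a * ‖w1‖ + b * ‖w2‖ := by
            rw [norm_smul a w1, norm_smul b w2, Real.norm_of_nonneg ha, Real.norm_of_nonneg hb]
        _ = 1 := by rw [h1.1, h2.1, mul_one, mul_one, hab]
    · exact key (a • w1 + b • w2) 1 (by rw [happ u huR, one_mul])
  · intro l hl
    have hmap' : ∀ m : List (E →L[ℝ] ℝ), (∀ e ∈ m, e ∈ Gamma R) →
        (m.map fun e => ‖e‖).sum = (m.length : ℝ) := by
      intro m hm
      induction m with
      | nil => simp
      | cons w l ih =>
        simp only [List.map_cons, List.sum_cons, List.length_cons]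
        rw [(hm w (List.mem_cons_self)).1,
          ih (fun e he => hm e (List.mem_cons_of_mem _ he))]
        push_cast; ring
    have hsum' : ∀ m : List (E →L[ℝ] ℝ), (∀ e ∈ m, e ∈ Gamma R) →
        m.sum u = (m.length : ℝ) * ‖u‖ := by
      intro m hm
      induction m with
      | nil => simp
      | cons w l ih =>
        have hw := hm w (List.mem_cons_self)
        simp only [List.sum_cons, ContinuousLinearMap.add_apply, List.length_cons]
        rw [hw.2 u huR, ih (fun e he => hm e (List.mem_cons_of_mem _ he))]
        push_cast; ring
    have hmap := hmap' l hl
    have hsum := hsum' l hl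
    rw [hmap]
    refine le_antisymm ((list_norm_sum_le l).trans_eq hmap) ?_
    exact key l.sum (l.length : ℝ) hsum
end

section
/- In a strictly convex normed space $E$, every T-set is of the form $\{t u : t \geq 0\}$ for some nonzero $u \in E$; consequently, any two distinct T-sets $S$ and $R$ in $E$ satisfy $S \cap R = \{0\}$. -/
private lemma ray_sum {E : Type*} [NormedAddCommGroup E] [NormedSpace ℝ E] (u : E)
    (l : List E) (h : ∀ e ∈ l, ∃ t : ℝ, 0 ≤ t ∧ e = t • u) :
    ∃ t : ℝ, 0 ≤ t ∧ l.sum = t • u ∧ (l.map fun e => ‖e‖).sum = t * ‖u‖ := by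
  induction l with
  | nil => exact ⟨0, le_refl _, by simp, by simp⟩
  | cons e l ih =>
    obtain ⟨t₁, ht₁, he⟩ := h e List.mem_cons_self
    obtain ⟨t, ht, hsum, hmap⟩ := ih (fun x hx => h x (List.mem_cons_of_mem e hx))
    refine ⟨t₁ + t, by positivity, ?_, ?_⟩
    · simp [he, hsum, add_smul]
    · simp [he, hmap, norm_smul, Real.norm_of_nonneg ht₁, add_mul]

private lemma ray_normAdditive {E : Type*} [NormedAddCommGroup E] [NormedSpace ℝ E] (u : E) :
    NormAdditive {v : E | ∃ t : ℝ, 0 ≤ t ∧ v = t • u} := by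
  intro l hl
  obtain ⟨t, ht, hsum, hmap⟩ := ray_sum u l hl
  rw [hsum, hmap, norm_smul, Real.norm_of_nonneg ht]

theorem tset_ray_of_strictConvex {E : Type*} [NormedAddCommGroup E] [NormedSpace ℝ E]
    [Nontrivial E] (hsc : ∀ u v : E, ‖u‖ = 1 → ‖v‖ = 1 → u ≠ v → ‖u + v‖ < 2) :
    (∀ S : Set E, IsTSet S → ∃ u : E, u ≠ 0 ∧ S = {v | ∃ t : ℝ, 0 ≤ t ∧ v = t • u}) ∧
      (∀ S R : Set E, IsTSet S → IsTSet R → S ≠ R → S ∩ R = {0}) := by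
  haveI : StrictConvexSpace ℝ E :=
    StrictConvexSpace.of_norm_add_ne_two fun x y hx hy hne => by
      have := hsc x y hx hy hne; linarith
  -- any two elements of a norm additive set satisfy the norm equality
  have hadd : ∀ S : Set E, NormAdditive S → ∀ x ∈ S, ∀ y ∈ S, ‖x + y‖ = ‖x‖ + ‖y‖ := by
    intro S hS x hx y hy
    have := hS [x, y] (by intro e he; simp at he; rcases he with rfl | rfl <;> assumption)
    simpa using this
  have main : ∀ S : Set E, IsTSet S →
      ∃ u : E, u ≠ 0 ∧ S = {v | ∃ t : ℝ, 0 ≤ t ∧ v = t • u} := by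
    intro S hS
    -- S contains a nonzero element
    obtain ⟨u, huS, hu0⟩ : ∃ u ∈ S, u ≠ 0 := by
      by_contra h
      push_neg at h
      obtain ⟨u₀, hu₀⟩ := exists_ne (0 : E)
      have hsub : S ⊆ {v : E | ∃ t : ℝ, 0 ≤ t ∧ v = t • u₀} := by
        intro x hx
        exact ⟨0, le_refl _, by simp [h x hx]⟩
      have heq := hS.2 _ (ray_normAdditive u₀) hsub
      have hmem : u₀ ∈ S := heq ▸ ⟨1, zero_le_one, (one_smul ℝ u₀).symm⟩
      exact hu₀ (h u₀ hmem)
    refine ⟨u, hu0, ?_⟩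
    have hsub : S ⊆ {v : E | ∃ t : ℝ, 0 ≤ t ∧ v = t • u} := by
      intro v hv
      rcases eq_or_ne v 0 with rfl | hv0
      · exact ⟨0, le_refl _, by simp⟩
      · have hray : SameRay ℝ u v :=
          sameRay_iff_norm_add.mpr (hadd S hS.1 u huS v hv)
        obtain ⟨r, hr, hrv⟩ := hray.exists_nonneg_left hu0
        exact ⟨r, hr, hrv.symm⟩
    exact (hS.2 _ (ray_normAdditive u) hsub).symm
  refine ⟨main, ?_⟩
  intro S R hSt hRt hne
  obtain ⟨u, hu0, rfl⟩ := main S hSt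
  obtain ⟨v, hv0, rfl⟩ := main R hRt
  ext x
  simp only [Set.mem_inter_iff, Set.mem_setOf_eq, Set.mem_singleton_iff]
  constructor
  · rintro ⟨⟨t, ht, rfl⟩, ⟨s, hs, hx⟩⟩
    by_contra hx0
    have ht0 : t ≠ 0 := fun h => hx0 (by simp [h])
    have hs0 : s ≠ 0 := fun h => by rw [h, zero_smul] at hx; exact hx0 hx
    have hv : v = (s⁻¹ * t) • u := by
      have : s⁻¹ • (s • v) = s⁻¹ • (t • u) := by rw [← hx]
      rwa [smul_smul, smul_smul, inv_mul_cancel₀ hs0, one_smul] at this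
    have hc : 0 < s⁻¹ * t := by
      have := lt_of_le_of_ne ht (Ne.symm ht0)
      have := lt_of_le_of_ne hs (Ne.symm hs0)
      positivity
    apply hne
    ext w
    simp only [Set.mem_setOf_eq]
    constructor
    · rintro ⟨r, hr, rfl⟩
      exact ⟨r * (s⁻¹ * t)⁻¹, by positivity, by
        rw [hv, smul_smul, mul_assoc, inv_mul_cancel₀ hc.ne', mul_one]⟩
    · rintro ⟨r, hr, rfl⟩
      exact ⟨r * (s⁻¹ * t), by positivity, by rw [hv, smul_smul]⟩
  · rintro rfl
    exact ⟨⟨0, le_refl _, by simp⟩, ⟨0, le_refl _, by simp⟩⟩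
end

section
/- Let $X$ be a locally compact Hausdorff space, $E$ a normed space, $S$ a T-set in $E$, and $x \in X$. Then the set $(S,x) = \{f \in C_0(X,E) : f(x) \in S, \|f\|_\infty = \|f(x)\|\}$ is a norm additive subset of $C_0(X,E)$. -/
open scoped ZeroAtInfty

/-- The set `(S, x)` of functions attaining their norm at `x` with value in `S`. -/
def TSetAt {X : Type*} [TopologicalSpace X] {E : Type*} [NormedAddCommGroup E]
    (S : Set E) (x : X) : Set C₀(X, E) := {f | f x ∈ S ∧ ‖f‖ = ‖f x‖}

theorem tsetAt_normAdditive {X : Type*} [TopologicalSpace X] [LocallyCompactSpace X]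
    [T2Space X] {E : Type*} [NormedAddCommGroup E]
    (S : Set E) (hS : IsTSet S) (x : X) :
    NormAdditive (TSetAt S x) := by
  intro l hl
  have hev : l.sum x = (l.map fun f => f x).sum := by
    induction l with
    | nil => simp
    | cons f t ih =>
      simp only [List.sum_cons, List.map_cons]
      rw [← ih (by intro e he; exact hl e (List.mem_cons_of_mem _ he))]
      rfl
  have h1 : ‖l.sum‖ ≤ (l.map fun f => ‖f‖).sum := by
    clear hev hl
    induction l with
    | nil => simp
    | cons f t ih =>
      simp only [List.sum_cons, List.map_cons]
      exact (norm_add_le _ _).trans (by gcongr)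
  have h2 : (l.map fun f => ‖f‖).sum = (l.map fun f => ‖f x‖).sum := by
    congr 1
    apply List.map_congr_left
    intro f hf
    exact (hl f hf).2
  have h3 : (l.map fun f => ‖f x‖).sum = ‖(l.map fun f => f x).sum‖ := by
    rw [hS.1 (l.map fun f => f x) (by
      intro e he
      obtain ⟨f, hf, rfl⟩ := List.mem_map.mp he
      exact (hl f hf).1), List.map_map]
    rfl
  have h4 : ‖(l.map fun f => f x).sum‖ ≤ ‖l.sum‖ := by
    rw [← hev]
    calc ‖l.sum x‖ = ‖l.sum.toBCF x‖ := rfl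
      _ ≤ ‖l.sum.toBCF‖ := BoundedContinuousFunction.norm_coe_le_norm _ _
      _ = ‖l.sum‖ := ZeroAtInftyContinuousMap.norm_toBCF_eq_norm
  have := h1.antisymm (by rw [h2, h3]; exact h4)
  rw [this, h2]
end

section
/- Let $X, Y$ be compact Hausdorff spaces, $E, F$ normed spaces, and $A \subseteq C(X,E)$, $B \subseteq C(Y,F)$ subspaces containing the constant functions, equipped with norms $\|f\|_A = \max(\|f\|_\infty, p(f))$ and $\|g\|_B = \max(\|g\|_\infty, q(g))$ where $p, q$ are seminorms vanishing on constants. If $T: A \to B$ is a surjective real-linear isometry (for $\|\cdot\|_A, \|\cdot\|_B$) such that both $T$ and $T^{-1}$ satisfy property (St), then $T$ is an isometry with respect to the supremum norms: $\|Tf\|_\infty = \|f\|_\infty$ for all $f \in A$. -/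
lemma aux_exists_max {Z : Type*} [TopologicalSpace Z] [CompactSpace Z] {G : Type*}
    [NormedAddCommGroup G] (h : C(Z, G)) (hpos : 0 < ‖h‖) : ∃ z, ‖h z‖ = ‖h‖ := by
  have hne : Nonempty Z := by
    by_contra hZ
    rw [not_nonempty_iff] at hZ
    have : ‖h‖ ≤ 0 := (ContinuousMap.norm_le h le_rfl).mpr fun z => (hZ.false z).elim
    linarith
  obtain ⟨z₀, -, hz₀⟩ := isCompact_univ.exists_isMaxOn (f := fun z => ‖h z‖)
    Set.univ_nonempty ((continuous_norm.comp h.continuous).continuousOn)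
  exact ⟨z₀, le_antisymm (h.norm_coe_le_norm z₀)
    ((ContinuousMap.norm_le h (norm_nonneg _)).mpr fun z => hz₀ (Set.mem_univ z))⟩

lemma aux_scale {G : Type*} [NormedAddCommGroup G] [NormedSpace ℝ G] {s : ℝ} (hs : 0 < s)
    (z u : G) (h : ‖z + s⁻¹ • u‖ > ‖s⁻¹ • u‖) : ‖s • z + u‖ > ‖u‖ := by
  have h1 : s • z + u = s • (z + s⁻¹ • u) := by
    rw [smul_add, smul_smul, mul_inv_cancel₀ hs.ne', one_smul]
  have h2 : ‖s⁻¹ • u‖ = s⁻¹ * ‖u‖ := by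
    rw [norm_smul, Real.norm_eq_abs, abs_of_pos (inv_pos.2 hs)]
  rw [h1, norm_smul, Real.norm_eq_abs, abs_of_pos hs]
  rw [h2] at h
  calc ‖u‖ = s * (s⁻¹ * ‖u‖) := by field_simp
  _ < s * ‖z + s⁻¹ • u‖ := by exact (mul_lt_mul_iff_right₀ hs).mpr h

lemma aux_colinear {G : Type*} [NormedAddCommGroup G] [NormedSpace ℝ G] {z : G} {c t : ℝ}
    (hc : 0 < c) (hz : ‖z‖ = c) (ht : 0 ≤ t) : ‖z + t • c⁻¹ • z‖ = c + t := by
  have h1 : z + t • c⁻¹ • z = (1 + t * c⁻¹) • z := by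
    rw [smul_smul]
    nth_rewrite 1 [← one_smul ℝ z]
    rw [← add_smul]
  have hpos : (0:ℝ) < 1 + t * c⁻¹ := by positivity
  rw [h1, norm_smul, Real.norm_eq_abs, abs_of_pos hpos, hz]
  field_simp



set_option maxHeartbeats 1600000 in
theorem sup_norm_isometry_of_St {X Y : Type*} [TopologicalSpace X] [CompactSpace X]
    [TopologicalSpace Y] [CompactSpace Y]
    {E F : Type*} [NormedAddCommGroup E] [NormedSpace ℝ E]
    [NormedAddCommGroup F] [NormedSpace ℝ F]
    (A : Submodule ℝ C(X, E)) (B : Submodule ℝ C(Y, F))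
    (hA : ∀ v : E, ContinuousMap.const X v ∈ A)
    (hB : ∀ w : F, ContinuousMap.const Y w ∈ B)
    (p : Seminorm ℝ A) (q : Seminorm ℝ B)
    (hp : ∀ v : E, p ⟨ContinuousMap.const X v, hA v⟩ = 0)
    (hq : ∀ w : F, q ⟨ContinuousMap.const Y w, hB w⟩ = 0)
    (T : A →ₗ[ℝ] B) (hsurj : Function.Surjective T)
    -- `T` is an isometry for the norms `max(‖·‖_∞, p(·))` and `max(‖·‖_∞, q(·))`
    (hiso : ∀ f : A, max ‖(T f : C(Y, F))‖ (q (T f)) = max ‖(f : C(X, E))‖ (p f))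
    -- property (St) for `T`
    (hSt : ∀ (u : F) (y₀ : Y), ∃ v : E, ‖v‖ = 1 ∧
      ‖(T ⟨ContinuousMap.const X v, hA v⟩ : C(Y, F)) y₀ + u‖ > ‖u‖)
    -- property (St) for `T⁻¹`
    (hSt' : ∀ (u : E) (x₀ : X), ∃ w : F, ‖w‖ = 1 ∧ ∃ g : A,
      T g = ⟨ContinuousMap.const Y w, hB w⟩ ∧ ‖(g : C(X, E)) x₀ + u‖ > ‖u‖) :
    ∀ f : A, ‖(T f : C(Y, F))‖ = ‖(f : C(X, E))‖ := by

  classical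
  -- Lemma 1: if `p h ≤ ‖h‖∞`, then `‖h‖∞ ≤ ‖T h‖∞` (uses hSt')
  have lem1 : ∀ h : A, p h ≤ ‖(h : C(X, E))‖ → ‖(h : C(X, E))‖ ≤ ‖(T h : C(Y, F))‖ := by
    intro h hph
    by_contra hlt
    push_neg at hlt
    have hiso_h := hiso h
    have hmaxA : max ‖(h : C(X, E))‖ (p h) = ‖(h : C(X, E))‖ := max_eq_left hph
    have h1 : max ‖(T h : C(Y, F))‖ (q (T h)) = ‖(h : C(X, E))‖ := hiso_h.trans hmaxA
    have hq2 : q (T h) ≤ ‖(h : C(X, E))‖ := le_trans (le_max_right _ _) h1.le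
    have hqTh : q (T h) = ‖(h : C(X, E))‖ := by
      by_contra hne
      have h3 : max ‖(T h : C(Y, F))‖ (q (T h)) < ‖(h : C(X, E))‖ :=
        max_lt hlt (lt_of_le_of_ne hq2 hne)
      rw [h1] at h3
      exact lt_irrefl _ h3
    have hHpos : 0 < ‖(h : C(X, E))‖ := lt_of_le_of_lt (norm_nonneg _) hlt
    obtain ⟨x₀, hx₀⟩ := aux_exists_max (h : C(X, E)) hHpos
    set s : ℝ := ‖(h : C(X, E))‖ - ‖(T h : C(Y, F))‖ with hs
    have hspos : 0 < s := sub_pos.mpr hlt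
    obtain ⟨w, hw1, g, hTg, hgt⟩ := hSt' (s⁻¹ • (h : C(X, E)) x₀) x₀
    have hbig : ‖s • (g : C(X, E)) x₀ + (h : C(X, E)) x₀‖ > ‖(h : C(X, E)) x₀‖ :=
      aux_scale hspos _ _ hgt
    set wc : B := (⟨ContinuousMap.const Y w, hB w⟩ : B) with hwc
    have hTF : T (h + s • g) = T h + s • wc := by rw [map_add, map_smul, hTg]
    have hisoF := hiso (h + s • g)
    have hconstw : ‖(wc : C(Y, F))‖ ≤ 1 := by
      rw [hwc]
      calc ‖(ContinuousMap.const Y w)‖ ≤ ‖w‖ :=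
            (ContinuousMap.norm_le _ (norm_nonneg w)).mpr fun y => le_rfl
        _ = 1 := hw1
    have hL1 : ‖(T (h + s • g) : C(Y, F))‖ ≤ ‖(h : C(X, E))‖ := by
      rw [hTF]
      calc ‖((T h + s • wc : B) : C(Y, F))‖
          = ‖(T h : C(Y, F)) + s • (wc : C(Y, F))‖ := by norm_cast
        _ ≤ ‖(T h : C(Y, F))‖ + ‖s • (wc : C(Y, F))‖ := norm_add_le _ _
        _ ≤ ‖(T h : C(Y, F))‖ + s * 1 := by
            rw [norm_smul, Real.norm_eq_abs, abs_of_pos hspos]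
            have := mul_le_mul_of_nonneg_left hconstw hspos.le
            linarith
        _ ≤ ‖(h : C(X, E))‖ := by rw [hs]; linarith
    have hL2 : q (T (h + s • g)) ≤ ‖(h : C(X, E))‖ := by
      rw [hTF]
      calc q (T h + s • wc) ≤ q (T h) + q (s • wc) := map_add_le_add q _ _
        _ = q (T h) + ‖s‖ * q wc := by rw [map_smul_eq_mul]
        _ = ‖(h : C(X, E))‖ := by rw [hqTh, hwc, hq w]; ring
    have hR : ‖((h + s • g : A) : C(X, E))‖ > ‖(h : C(X, E))‖ := by
      have happ : ((h + s • g : A) : C(X, E)) x₀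
          = (h : C(X, E)) x₀ + s • (g : C(X, E)) x₀ := by
        push_cast
        simp
      calc ‖(h : C(X, E))‖ = ‖(h : C(X, E)) x₀‖ := hx₀.symm
        _ < ‖s • (g : C(X, E)) x₀ + (h : C(X, E)) x₀‖ := hbig
        _ = ‖((h + s • g : A) : C(X, E)) x₀‖ := by rw [happ, add_comm]
        _ ≤ ‖((h + s • g : A) : C(X, E))‖ := ContinuousMap.norm_coe_le_norm _ _
    have hcontr : max ‖(T (h + s • g) : C(Y, F))‖ (q (T (h + s • g)))
        ≤ ‖(h : C(X, E))‖ := max_le hL1 hL2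
    rw [hisoF] at hcontr
    have := le_trans (le_max_left ‖((h + s • g : A) : C(X, E))‖ (p (h + s • g))) hcontr
    linarith
  -- Lemma 2: if `q (T h) ≤ ‖T h‖∞`, then `‖T h‖∞ ≤ ‖h‖∞` (uses hSt)
  have lem2 : ∀ h : A, q (T h) ≤ ‖(T h : C(Y, F))‖ → ‖(T h : C(Y, F))‖ ≤ ‖(h : C(X, E))‖ := by
    intro h hqh
    by_contra hlt
    push_neg at hlt
    have hiso_h := hiso h
    have hmaxB : max ‖(T h : C(Y, F))‖ (q (T h)) = ‖(T h : C(Y, F))‖ := max_eq_left hqh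
    have h1 : max ‖(h : C(X, E))‖ (p h) = ‖(T h : C(Y, F))‖ := (hiso_h.symm.trans hmaxB)
    have hp2 : p h ≤ ‖(T h : C(Y, F))‖ := le_trans (le_max_right _ _) h1.le
    have hpTh : p h = ‖(T h : C(Y, F))‖ := by
      by_contra hne
      have h3 : max ‖(h : C(X, E))‖ (p h) < ‖(T h : C(Y, F))‖ :=
        max_lt hlt (lt_of_le_of_ne hp2 hne)
      rw [h1] at h3
      exact lt_irrefl _ h3
    have hKpos : 0 < ‖(T h : C(Y, F))‖ := lt_of_le_of_lt (norm_nonneg _) hlt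
    obtain ⟨y₀, hy₀⟩ := aux_exists_max (T h : C(Y, F)) hKpos
    set s : ℝ := ‖(T h : C(Y, F))‖ - ‖(h : C(X, E))‖ with hs
    have hspos : 0 < s := sub_pos.mpr hlt
    obtain ⟨v, hv1, hvt⟩ := hSt (s⁻¹ • (T h : C(Y, F)) y₀) y₀
    set vc : A := (⟨ContinuousMap.const X v, hA v⟩ : A) with hvc
    have hbig : ‖s • (T vc : C(Y, F)) y₀ + (T h : C(Y, F)) y₀‖ > ‖(T h : C(Y, F)) y₀‖ :=
      aux_scale hspos _ _ hvt
    have hisoF := hiso (h + s • vc)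
    have hconstv : ‖(vc : C(X, E))‖ ≤ 1 := by
      rw [hvc]
      calc ‖(ContinuousMap.const X v)‖ ≤ ‖v‖ :=
            (ContinuousMap.norm_le _ (norm_nonneg v)).mpr fun x => le_rfl
        _ = 1 := hv1
    have hR1 : ‖((h + s • vc : A) : C(X, E))‖ ≤ ‖(T h : C(Y, F))‖ := by
      calc ‖((h + s • vc : A) : C(X, E))‖
          = ‖(h : C(X, E)) + s • (vc : C(X, E))‖ := by norm_cast
        _ ≤ ‖(h : C(X, E))‖ + ‖s • (vc : C(X, E))‖ := norm_add_le _ _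
        _ ≤ ‖(h : C(X, E))‖ + s * 1 := by
            rw [norm_smul, Real.norm_eq_abs, abs_of_pos hspos]
            have := mul_le_mul_of_nonneg_left hconstv hspos.le
            linarith
        _ ≤ ‖(T h : C(Y, F))‖ := by rw [hs]; linarith
    have hR2 : p (h + s • vc) ≤ ‖(T h : C(Y, F))‖ := by
      calc p (h + s • vc) ≤ p h + p (s • vc) := map_add_le_add p _ _
        _ = p h + ‖s‖ * p vc := by rw [map_smul_eq_mul]
        _ = ‖(T h : C(Y, F))‖ := by rw [hpTh, hvc, hp v]; ring
    have hL : ‖(T (h + s • vc) : C(Y, F))‖ > ‖(T h : C(Y, F))‖ := by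
      have hTF : T (h + s • vc) = T h + s • T vc := by rw [map_add, map_smul]
      have happ : (T (h + s • vc) : C(Y, F)) y₀
          = (T h : C(Y, F)) y₀ + s • (T vc : C(Y, F)) y₀ := by
        rw [hTF]
        push_cast
        simp
      calc ‖(T h : C(Y, F))‖ = ‖(T h : C(Y, F)) y₀‖ := hy₀.symm
        _ < ‖s • (T vc : C(Y, F)) y₀ + (T h : C(Y, F)) y₀‖ := hbig
        _ = ‖(T (h + s • vc) : C(Y, F)) y₀‖ := by rw [happ, add_comm]
        _ ≤ ‖(T (h + s • vc) : C(Y, F))‖ := ContinuousMap.norm_coe_le_norm _ _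
    have hcontr : max ‖((h + s • vc : A) : C(X, E))‖ (p (h + s • vc))
        ≤ ‖(T h : C(Y, F))‖ := max_le hR1 hR2
    rw [← hisoF] at hcontr
    have := le_trans (le_max_left ‖(T (h + s • vc) : C(Y, F))‖ (q (T (h + s • vc)))) hcontr
    linarith
  -- key1 : ‖h‖∞ ≤ ‖T h‖∞ for all h
  have key1 : ∀ h : A, ‖(h : C(X, E))‖ ≤ ‖(T h : C(Y, F))‖ := by
    intro h
    rcases (norm_nonneg ((h : C(X, E)))).eq_or_lt with h0 | hpos
    · rw [← h0]; exact norm_nonneg _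
    obtain ⟨x₀, hx₀⟩ := aux_exists_max (h : C(X, E)) hpos
    set M : ℝ := ‖(h : C(X, E))‖ with hM
    set v : E := M⁻¹ • (h : C(X, E)) x₀ with hv
    set vc : A := (⟨ContinuousMap.const X v, hA v⟩ : A) with hvc
    set t : ℝ := p h with ht
    clear_value M v vc t
    have hv1 : ‖v‖ = 1 := by
      rw [hv, norm_smul, Real.norm_eq_abs, abs_of_pos (inv_pos.2 hpos), hx₀]
      exact inv_mul_cancel₀ hpos.ne'
    have htnn : 0 ≤ t := by rw [ht]; exact apply_nonneg p h
    have hconstv : ‖(vc : C(X, E))‖ ≤ 1 := by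
      rw [hvc]
      calc ‖(ContinuousMap.const X v)‖ ≤ ‖v‖ :=
            (ContinuousMap.norm_le _ (norm_nonneg v)).mpr fun x => le_rfl
        _ = 1 := hv1
    -- the norm of h + t • vc is t + M
    have happ : ((h + t • vc : A) : C(X, E)) x₀ = (h : C(X, E)) x₀ + t • v := by
      push_cast
      simp [hvc]
    have hlow : M + t ≤ ‖((h + t • vc : A) : C(X, E))‖ := by
      have : ‖((h + t • vc : A) : C(X, E)) x₀‖ = M + t := by
        rw [happ, hv]
        exact aux_colinear hpos hx₀ htnn
      rw [← this]
      exact ContinuousMap.norm_coe_le_norm _ _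
    have hpFt : p (h + t • vc) ≤ ‖((h + t • vc : A) : C(X, E))‖ := by
      have : p (h + t • vc) ≤ t := by
        calc p (h + t • vc) ≤ p h + p (t • vc) := map_add_le_add p _ _
          _ = p h + ‖t‖ * p vc := by rw [map_smul_eq_mul]
          _ = t := by rw [← ht, hvc, hp v]; ring
      calc p (h + t • vc) ≤ t := this
        _ ≤ M + t := by linarith
        _ ≤ ‖((h + t • vc : A) : C(X, E))‖ := hlow
    have h1 := lem1 (h + t • vc) hpFt
    have hTvc : ‖(T vc : C(Y, F))‖ ≤ 1 := by
      have h2 := hiso vc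
      have h3 : max ‖(vc : C(X, E))‖ (p vc) ≤ 1 := by
        apply max_le hconstv
        rw [hvc, hp v]
        norm_num
      exact le_trans (le_max_left _ _) (h2.le.trans h3)
    have hup : ‖(T (h + t • vc) : C(Y, F))‖ ≤ ‖(T h : C(Y, F))‖ + t := by
      have hTF : T (h + t • vc) = T h + t • T vc := by rw [map_add, map_smul]
      rw [hTF]
      calc ‖((T h + t • T vc : B) : C(Y, F))‖
          = ‖(T h : C(Y, F)) + t • (T vc : C(Y, F))‖ := by norm_cast
        _ ≤ ‖(T h : C(Y, F))‖ + ‖t • (T vc : C(Y, F))‖ := norm_add_le _ _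
        _ ≤ ‖(T h : C(Y, F))‖ + t := by
            rw [norm_smul, Real.norm_eq_abs, abs_of_nonneg htnn]
            nlinarith
    have := le_trans hlow (le_trans h1 hup)
    linarith
  -- key2 : ‖T h‖∞ ≤ ‖h‖∞ for all h
  have key2 : ∀ h : A, ‖(T h : C(Y, F))‖ ≤ ‖(h : C(X, E))‖ := by
    intro h
    rcases (norm_nonneg ((T h : C(Y, F)))).eq_or_lt with h0 | hpos
    · rw [← h0]; exact norm_nonneg _
    obtain ⟨y₀, hy₀⟩ := aux_exists_max (T h : C(Y, F)) hpos
    set N : ℝ := ‖(T h : C(Y, F))‖ with hN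
    set w : F := N⁻¹ • (T h : C(Y, F)) y₀ with hw
    set wc : B := (⟨ContinuousMap.const Y w, hB w⟩ : B) with hwc
    set t : ℝ := q (T h) with ht
    clear_value N w wc t
    obtain ⟨G, hG⟩ := hsurj wc
    have hw1 : ‖w‖ = 1 := by
      rw [hw, norm_smul, Real.norm_eq_abs, abs_of_pos (inv_pos.2 hpos), hy₀]
      exact inv_mul_cancel₀ hpos.ne'
    have htnn : 0 ≤ t := by rw [ht]; exact apply_nonneg q (T h)
    have hconstw : ‖(wc : C(Y, F))‖ ≤ 1 := by
      rw [hwc]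
      calc ‖(ContinuousMap.const Y w)‖ ≤ ‖w‖ :=
            (ContinuousMap.norm_le _ (norm_nonneg w)).mpr fun y => le_rfl
        _ = 1 := hw1
    have hTF : T (h + t • G) = T h + t • wc := by rw [map_add, map_smul, hG]
    have happ : (T (h + t • G) : C(Y, F)) y₀ = (T h : C(Y, F)) y₀ + t • w := by
      rw [hTF]
      push_cast
      simp [hwc]
    have hlow : N + t ≤ ‖(T (h + t • G) : C(Y, F))‖ := by
      have : ‖(T (h + t • G) : C(Y, F)) y₀‖ = N + t := by
        rw [happ, hw]
        exact aux_colinear hpos hy₀ htnn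
      rw [← this]
      exact ContinuousMap.norm_coe_le_norm _ _
    have hqFt : q (T (h + t • G)) ≤ ‖(T (h + t • G) : C(Y, F))‖ := by
      have : q (T (h + t • G)) ≤ t := by
        rw [hTF]
        calc q (T h + t • wc) ≤ q (T h) + q (t • wc) := map_add_le_add q _ _
          _ = q (T h) + ‖t‖ * q wc := by rw [map_smul_eq_mul]
          _ = t := by rw [← ht, hwc, hq w]; ring
      calc q (T (h + t • G)) ≤ t := this
        _ ≤ N + t := by linarith
        _ ≤ ‖(T (h + t • G) : C(Y, F))‖ := hlow
    have h1 := lem2 (h + t • G) hqFt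
    have hGle : ‖(G : C(X, E))‖ ≤ 1 := by
      have h2 := hiso G
      rw [hG] at h2
      have h3 : max ‖(wc : C(Y, F))‖ (q wc) ≤ 1 := by
        apply max_le hconstw
        rw [hwc, hq w]
        norm_num
      exact le_trans (le_max_left _ _) (h2.symm.le.trans h3)
    have hup : ‖((h + t • G : A) : C(X, E))‖ ≤ ‖(h : C(X, E))‖ + t := by
      calc ‖((h + t • G : A) : C(X, E))‖
          = ‖(h : C(X, E)) + t • (G : C(X, E))‖ := by norm_cast
        _ ≤ ‖(h : C(X, E))‖ + ‖t • (G : C(X, E))‖ := norm_add_le _ _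
        _ ≤ ‖(h : C(X, E))‖ + t := by
            rw [norm_smul, Real.norm_eq_abs, abs_of_nonneg htnn]
            nlinarith
    have := le_trans hlow (le_trans h1 hup)
    linarith
  intro f
  exact le_antisymm (key2 f) (key1 f)
end
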